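/- Let M = UΣVᵀ be an SVD of M ∈ ℝ^{m×n} with singular values σ. Then the proximal operator of λ times the nuclear norm is prox_{λ‖·‖_*}(M) = U diag(prox_{λ‖·‖₁}(σ)) Vᵀ, where prox_{λ‖·‖₁}(σ)_i = max(σ_i − λ, 0) (singular value soft-thresholding). -/

import Mathlib

open Matrix BigOperators

/-- Frobenius inner product. -/
def frobInner {m n : ℕ} (A B : Matrix (Fin m) (Fin n) ℝ) : ℝ :=
  ∑ i, ∑ j, A i j * B i j

/-- Squared Frobenius norm. -/
def frobSq {m n : ℕ} (A : Matrix (Fin m) (Fin n) ℝ) : ℝ :=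
  ∑ i, ∑ j, (A i j)^2

/-- The nuclear norm of `A`, via its dual (variational) characterization:
`‖A‖_* = sup { ⟨Q, A⟩_F : ‖Q‖_op ≤ 1 }`, where `‖Q‖_op ≤ 1 ⟺ I − QᵀQ ⪰ 0`. -/
noncomputable def nuclearNorm {m n : ℕ} (A : Matrix (Fin m) (Fin n) ℝ) : ℝ :=
  sSup {t : ℝ | ∃ Q : Matrix (Fin m) (Fin n) ℝ,
    (1 - Qᵀ * Q).PosSemidef ∧ t = frobInner Q A}

section aux
variable {m n : ℕ}

lemma frobSq_nonneg' (A : Matrix (Fin m) (Fin n) ℝ) : 0 ≤ frobSq A :=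
  Finset.sum_nonneg fun _ _ => Finset.sum_nonneg fun _ _ => sq_nonneg _

lemma frobSq_sub' (A B : Matrix (Fin m) (Fin n) ℝ) :
    frobSq (A - B) = frobSq A - 2 * frobInner A B + frobSq B := by
  unfold frobSq frobInner
  rw [Finset.mul_sum, ← Finset.sum_sub_distrib, ← Finset.sum_add_distrib]
  refine Finset.sum_congr rfl fun i _ => ?_
  rw [Finset.mul_sum, ← Finset.sum_sub_distrib, ← Finset.sum_add_distrib]
  refine Finset.sum_congr rfl fun j _ => ?_
  simp [Matrix.sub_apply]; ring

lemma frobInner_sub_right' (A B C : Matrix (Fin m) (Fin n) ℝ) :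
    frobInner A (B - C) = frobInner A B - frobInner A C := by
  unfold frobInner
  rw [← Finset.sum_sub_distrib]
  refine Finset.sum_congr rfl fun i _ => ?_
  rw [← Finset.sum_sub_distrib]
  refine Finset.sum_congr rfl fun j _ => ?_
  simp [Matrix.sub_apply]; ring

lemma frobInner_smul_left' (c : ℝ) (A B : Matrix (Fin m) (Fin n) ℝ) :
    frobInner (c • A) B = c * frobInner A B := by
  unfold frobInner
  rw [Finset.mul_sum]
  refine Finset.sum_congr rfl fun i _ => ?_
  rw [Finset.mul_sum]
  refine Finset.sum_congr rfl fun j _ => ?_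
  simp [Matrix.smul_apply]; ring

lemma frobInner_eq_trace' (A B : Matrix (Fin m) (Fin n) ℝ) :
    frobInner A B = Matrix.trace (Aᵀ * B) := by
  unfold frobInner
  rw [Matrix.trace]
  simp only [Matrix.diag_apply, Matrix.mul_apply, Matrix.transpose_apply]
  exact Finset.sum_comm

lemma frobInner_rot' (U : Matrix (Fin m) (Fin m) ℝ) (V : Matrix (Fin n) (Fin n) ℝ)
    (Q B : Matrix (Fin m) (Fin n) ℝ) :
    frobInner Q (U * B * Vᵀ) = frobInner (Uᵀ * Q * V) B := by
  rw [frobInner_eq_trace', frobInner_eq_trace']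
  have h1 : (Uᵀ * Q * V)ᵀ * B = Vᵀ * (Qᵀ * (U * B)) := by
    simp [Matrix.transpose_mul, Matrix.mul_assoc]
  rw [h1, Matrix.trace_mul_comm, Matrix.mul_assoc (U * B) Vᵀ Qᵀ, Matrix.trace_mul_comm, Matrix.mul_assoc]

lemma entry_abs_le_one' {Q : Matrix (Fin m) (Fin n) ℝ}
    (h : (1 - Qᵀ * Q).PosSemidef) (i : Fin m) (j : Fin n) : |Q i j| ≤ 1 := by
  have h2 := h.dotProduct_mulVec_nonneg (Pi.single j 1)
  have hval : dotProduct (star (Pi.single j (1:ℝ))) ((1 - Qᵀ * Q) *ᵥ Pi.single j 1)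
      = 1 - ∑ k, Q k j ^ 2 := by
    simp [dotProduct, Matrix.mulVec, Matrix.sub_apply, Matrix.one_apply, Matrix.mul_apply,
      Pi.single_apply, mul_ite, ite_mul, Finset.sum_ite_eq', sq, dotProduct]
  rw [hval] at h2
  have h3 : Q i j ^ 2 ≤ ∑ k, Q k j ^ 2 :=
    Finset.single_le_sum (f := fun k => Q k j ^ 2) (fun k _ => sq_nonneg _) (Finset.mem_univ i)
  have h4 : Q i j ^ 2 ≤ 1 := by linarith
  nlinarith [sq_abs (Q i j), abs_nonneg (Q i j)]

lemma feas_set_bddAbove' (A : Matrix (Fin m) (Fin n) ℝ) :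
    BddAbove {t : ℝ | ∃ Q : Matrix (Fin m) (Fin n) ℝ,
      (1 - Qᵀ * Q).PosSemidef ∧ t = frobInner Q A} := by
  refine ⟨∑ i, ∑ j, |A i j|, ?_⟩
  rintro t ⟨Q, hQ, rfl⟩
  refine Finset.sum_le_sum fun i _ => Finset.sum_le_sum fun j _ => ?_
  calc Q i j * A i j ≤ |Q i j * A i j| := le_abs_self _
    _ = |Q i j| * |A i j| := abs_mul _ _
    _ ≤ 1 * |A i j| := mul_le_mul_of_nonneg_right (entry_abs_le_one' hQ i j) (abs_nonneg _)
    _ = |A i j| := one_mul _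

lemma zero_mem_feas_set' (A : Matrix (Fin m) (Fin n) ℝ) :
    (0:ℝ) ∈ {t : ℝ | ∃ Q : Matrix (Fin m) (Fin n) ℝ,
      (1 - Qᵀ * Q).PosSemidef ∧ t = frobInner Q A} := by
  refine ⟨0, ?_, by simp [frobInner]⟩
  simpa using (Matrix.PosSemidef.one (n := Fin n) (R := ℝ))

lemma frobInner_le_nuclearNorm' {Q A : Matrix (Fin m) (Fin n) ℝ}
    (hQ : (1 - Qᵀ * Q).PosSemidef) : frobInner Q A ≤ nuclearNorm A :=
  le_csSup (feas_set_bddAbove' A) ⟨Q, hQ, rfl⟩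

lemma feas_rot' (U : Matrix (Fin m) (Fin m) ℝ) (V : Matrix (Fin n) (Fin n) ℝ)
    (hUU : U * Uᵀ = 1) (hVV : V * Vᵀ = 1) (E : Matrix (Fin m) (Fin n) ℝ)
    (hfeas : (1 - Eᵀ * E).PosSemidef) :
    (1 - (U * E * Vᵀ)ᵀ * (U * E * Vᵀ)).PosSemidef := by
  have hUtU : Uᵀ * U = 1 := mul_eq_one_comm.mp hUU
  have h1 : (U * E * Vᵀ)ᵀ * (U * E * Vᵀ) = V * (Eᵀ * E) * Vᵀ := by
    calc (U * E * Vᵀ)ᵀ * (U * E * Vᵀ)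
        = V * (Eᵀ * (Uᵀ * U) * E) * Vᵀ := by
          simp only [Matrix.transpose_mul, Matrix.transpose_transpose, Matrix.mul_assoc]
      _ = V * (Eᵀ * E) * Vᵀ := by rw [hUtU, Matrix.mul_one]
  have key : 1 - (U * E * Vᵀ)ᵀ * (U * E * Vᵀ) = V * (1 - Eᵀ * E) * Vᵀ := by
    rw [h1, Matrix.mul_sub, Matrix.sub_mul, Matrix.mul_one, hVV]
  rw [key, ← Matrix.conjTranspose_eq_transpose_of_trivial V]
  exact hfeas.mul_mul_conjTranspose_same V

end aux

/-- if `M = U S Vᵀ` is an SVD of `M ∈ ℝ^{m×n}` (with `U, V`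
orthogonal and `S` nonnegative and supported on the diagonal), then
`prox_{λ‖·‖_*}(M) = U S' Vᵀ`, where `S'` soft-thresholds the singular values:
`S' i j = max (S i j − λ) 0`; i.e. `U S' Vᵀ` is the unique minimizer of
`Z ↦ ½‖M − Z‖_F² + λ‖Z‖_*`. -/
theorem prox_nuclear_norm_svd_soft_thresholding {m n : ℕ}
    (lam : ℝ) (hlam : 0 ≤ lam)
    (M : Matrix (Fin m) (Fin n) ℝ)
    (U : Matrix (Fin m) (Fin m) ℝ) (V : Matrix (Fin n) (Fin n) ℝ)
    (hU : Uᵀ * U = 1) (hV : Vᵀ * V = 1)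
    (S : Matrix (Fin m) (Fin n) ℝ)
    (hSnn : ∀ i j, 0 ≤ S i j)
    (hSdiag : ∀ (i : Fin m) (j : Fin n), (i : ℕ) ≠ (j : ℕ) → S i j = 0)
    (hSVD : M = U * S * Vᵀ) :
    (∀ Z, (1/2) * frobSq (M - U * (Matrix.of fun i j => max (S i j - lam) 0) * Vᵀ)
            + lam * nuclearNorm (U * (Matrix.of fun i j => max (S i j - lam) 0) * Vᵀ)
          ≤ (1/2) * frobSq (M - Z) + lam * nuclearNorm Z) ∧
    (∀ Z, (∀ Z', (1/2) * frobSq (M - Z) + lam * nuclearNorm Z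
            ≤ (1/2) * frobSq (M - Z') + lam * nuclearNorm Z') →
      Z = U * (Matrix.of fun i j => max (S i j - lam) 0) * Vᵀ) := by
  classical
  set S' : Matrix (Fin m) (Fin n) ℝ := Matrix.of fun i j => max (S i j - lam) 0 with hS'def
  set P : Matrix (Fin m) (Fin n) ℝ := U * S' * Vᵀ with hPdef
  have hUU : U * Uᵀ = 1 := mul_eq_one_comm.mp hU
  have hVV : V * Vᵀ = 1 := mul_eq_one_comm.mp hV
  -- the "dual certificate" matrix
  set E : Matrix (Fin m) (Fin n) ℝ := Matrix.of fun i j => min (S i j) lam / lam with hEdef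
  have hE0 : ∀ (i : Fin m) (j : Fin n), (i : ℕ) ≠ (j : ℕ) → E i j = 0 := by
    intro i j hij
    simp [hEdef, hSdiag i j hij, min_eq_left hlam]
  have hEsq : ∀ (i : Fin m) (j : Fin n), (E i j)^2 ≤ 1 := by
    intro i j
    have h1 : 0 ≤ min (S i j) lam := le_min (hSnn i j) hlam
    have h2 : min (S i j) lam ≤ lam := min_le_right _ _
    rcases eq_or_lt_of_le hlam with h0 | h0
    · simp [hEdef, ← h0]
    · have : E i j = min (S i j) lam / lam := rfl
      rw [this]
      rw [div_pow]
      rw [div_le_one (by positivity)]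
      nlinarith
  -- S - S' = lam • E
  have hSmS' : S - S' = lam • E := by
    ext i j
    simp only [Matrix.sub_apply, Matrix.smul_apply, hS'def, hEdef, Matrix.of_apply,
      smul_eq_mul]
    rcases eq_or_lt_of_le hlam with h0 | h0
    · rw [← h0]
      simp [hSnn i j, max_eq_left (by linarith [hSnn i j] : S i j - 0 ≤ S i j)]
    · rcases le_total (S i j) lam with hc | hc
      · rw [max_eq_right (by linarith), min_eq_left hc]
        field_simp
        ring
      · rw [max_eq_left (by linarith), min_eq_right hc]
        field_simp
        ring
  -- E is feasible
  have hEfeas : (1 - Eᵀ * E).PosSemidef := by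
    have hdiag : Eᵀ * E = Matrix.diagonal (fun j => ∑ i, (E i j)^2) := by
      ext j k
      by_cases hjk : j = k
      · subst hjk
        simp [Matrix.mul_apply, Matrix.transpose_apply, sq]
      · rw [Matrix.diagonal_apply_ne _ hjk]
        simp only [Matrix.mul_apply, Matrix.transpose_apply]
        refine Finset.sum_eq_zero fun i _ => ?_
        by_cases hij : (i : ℕ) = (j : ℕ)
        · have : (i : ℕ) ≠ (k : ℕ) := by
            intro h; exact hjk (Fin.ext (hij ▸ h))
          rw [hE0 i k this, mul_zero]
        · rw [hE0 i j hij, zero_mul]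
    have hsum : ∀ j, ∑ i, (E i j)^2 ≤ 1 := by
      intro j
      by_cases hjm : (j : ℕ) < m
      · calc ∑ i, (E i j)^2 ≤ ∑ i, (if i = (⟨(j:ℕ), hjm⟩ : Fin m) then (1:ℝ) else 0) := by
              refine Finset.sum_le_sum fun i _ => ?_
              by_cases h : i = (⟨(j:ℕ), hjm⟩ : Fin m)
              · simpa [h] using hEsq i j
              · have : (i : ℕ) ≠ (j : ℕ) := fun hc => h (Fin.ext hc)
                simp [h, hE0 i j this]
          _ = 1 := by simp
      · have : ∀ i : Fin m, E i j = 0 := fun i =>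
          hE0 i j (by have := i.isLt; omega)
        simp [this]
    rw [hdiag, ← Matrix.diagonal_one, Matrix.diagonal_sub]
    exact Matrix.posSemidef_diagonal_iff.mpr fun j => by linarith [hsum j]
  have hMP : M - P = lam • (U * E * Vᵀ) := by
    rw [hSVD, hPdef]
    rw [show U * S * Vᵀ - U * S' * Vᵀ = U * (S - S') * Vᵀ by
      rw [Matrix.mul_sub, Matrix.sub_mul]]
    rw [hSmS', Matrix.mul_smul, Matrix.smul_mul]
  have hQfeas : (1 - (U * E * Vᵀ)ᵀ * (U * E * Vᵀ)).PosSemidef :=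
    feas_rot' U V hUU hVV E hEfeas
  -- lower bound : ⟨M - P, Z⟩ ≤ lam * N(Z)
  have hlow : ∀ Z, frobInner (M - P) Z ≤ lam * nuclearNorm Z := by
    intro Z
    rw [hMP, frobInner_smul_left']
    exact mul_le_mul_of_nonneg_left (frobInner_le_nuclearNorm' hQfeas) hlam
  -- upper bound at P : lam * N(P) ≤ ⟨M - P, P⟩
  have hub : lam * nuclearNorm P ≤ frobInner (M - P) P := by
    have hNP : nuclearNorm P ≤ ∑ i, ∑ j, S' i j := by
      refine csSup_le ⟨0, zero_mem_feas_set' P⟩ ?_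
      rintro t ⟨Q, hQ, rfl⟩
      rw [hPdef, frobInner_rot']
      have hR : (1 - (Uᵀ * Q * V)ᵀ * (Uᵀ * Q * V)).PosSemidef := by
        have := feas_rot' Uᵀ Vᵀ (by rwa [Matrix.transpose_transpose])
          (by rwa [Matrix.transpose_transpose]) Q hQ
        rwa [Matrix.transpose_transpose] at this
      refine Finset.sum_le_sum fun i _ => Finset.sum_le_sum fun j _ => ?_
      have h0 : 0 ≤ S' i j := le_max_right _ _
      calc (Uᵀ * Q * V) i j * S' i j ≤ 1 * S' i j :=
            mul_le_mul_of_nonneg_right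
              (le_trans (le_abs_self _) (entry_abs_le_one' hR i j)) h0
        _ = S' i j := one_mul _
    have hval : frobInner (M - P) P = lam * (∑ i, ∑ j, S' i j) := by
      have hD : Uᵀ * (M - P) * V = S - S' := by
        rw [hSVD, hPdef]
        rw [show U * S * Vᵀ - U * S' * Vᵀ = U * (S - S') * Vᵀ by
          rw [Matrix.mul_sub, Matrix.sub_mul]]
        calc Uᵀ * (U * (S - S') * Vᵀ) * V
            = (Uᵀ * U) * (S - S') * (Vᵀ * V) := by
              simp only [Matrix.mul_assoc]
          _ = S - S' := by rw [hU, hV, Matrix.one_mul, Matrix.mul_one]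
      have h1 : frobInner (M - P) P = frobInner (S - S') S' := by
        conv_lhs => rw [hPdef]
        rw [show frobInner (M - P) (U * S' * Vᵀ) = frobInner (Uᵀ * (M - P) * V) S' from
          frobInner_rot' U V (M - P) S']
        rw [hD]
      rw [h1]
      unfold frobInner
      rw [Finset.mul_sum]
      refine Finset.sum_congr rfl fun i _ => ?_
      rw [Finset.mul_sum]
      refine Finset.sum_congr rfl fun j _ => ?_
      simp only [Matrix.sub_apply, hS'def, Matrix.of_apply]
      rcases le_total (S i j) lam with hc | hc
      · rw [max_eq_right (by linarith)]; ring
      · rw [max_eq_left (by linarith)]; ring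
    rw [hval]
    exact mul_le_mul_of_nonneg_left hNP hlam
  -- master inequality
  have master : ∀ Z, (1/2) * frobSq (M - P) + lam * nuclearNorm P + (1/2) * frobSq (Z - P)
      ≤ (1/2) * frobSq (M - Z) + lam * nuclearNorm Z := by
    intro Z
    have e1 : frobSq (M - Z) = frobSq (M - P) - 2 * frobInner (M - P) (Z - P) + frobSq (Z - P) := by
      rw [show M - Z = (M - P) - (Z - P) by abel]
      exact frobSq_sub' _ _
    have e2 : frobInner (M - P) (Z - P) = frobInner (M - P) Z - frobInner (M - P) P :=
      frobInner_sub_right' _ _ _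
    have e3 := hlow Z
    linarith [frobSq_nonneg' (Z - P)]
  constructor
  · intro Z
    have := master Z
    linarith [frobSq_nonneg' (Z - P)]
  · intro Z hZ
    have h1 := master Z
    have h2 := hZ P
    have h3 : frobSq (Z - P) ≤ 0 := by linarith
    have h4 : frobSq (Z - P) = 0 := le_antisymm h3 (frobSq_nonneg' _)
    have h5 : Z - P = 0 := by
      ext i j
      have hrow := (Finset.sum_eq_zero_iff_of_nonneg
        (fun i _ => Finset.sum_nonneg fun j _ => sq_nonneg ((Z - P) i j))).mp h4 i
        (Finset.mem_univ i)
      have hentry := (Finset.sum_eq_zero_iff_of_nonneg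
        (fun j _ => sq_nonneg ((Z - P) i j))).mp hrow j (Finset.mem_univ j)
      have := pow_eq_zero_iff (n := 2) (by norm_num) |>.mp hentry
      simpa using this
    have : Z = P := by
      have := sub_eq_zero.mp h5
      exact this
    exact this
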